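/- With the Bernoulli-sequence model, the selfish-mining cycle length L is almost surely finite, i.e. μ(L < ∞) = 1; equivalently, p + pq + pq² + ∑_{n=3}^∞ p^{n−1}·q^n·C_{n−2} = 1, where C_m = (2m)!/(m!·(m+1)!) is the m-th Catalan number. -/

import Mathlib

open MeasureTheory ENNReal
open scoped BigOperators Classical

/-- The `n`-th Catalan number `C_n = (2n)! / (n! * (n+1)!)`, as a real number. -/
noncomputable def catalanC (n : ℕ) : ℝ :=
  (Nat.factorial (2 * n) : ℝ) / ((Nat.factorial n : ℝ) * (Nat.factorial (n + 1) : ℝ))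

/-- Blocks are labelled by `Bool`: `true` = `S` (selfish/attacker block),
`false` = `H` (honest block). The walk `W k = #{i < k : X_i = S} - #{i < k : X_i = H}`. -/
def walkW (ω : ℕ → Bool) (k : ℕ) : ℤ :=
  (((Finset.range k).filter fun i => ω i = true).card : ℤ) -
    (((Finset.range k).filter fun i => ω i = false).card : ℤ)

/-- The selfish-mining cycle length `L : Ω → ℕ∞` : `L = 1` if `X_0 = H`; `L = 2` if
`X_0 = S, X_1 = H`; and if `X_0 = X_1 = S`, `L = (σ + 1) / 2` where
`σ = inf {k ≥ 2 : W k = 1}`, with `L = ∞` if no such `k` exists. -/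
noncomputable def smL (ω : ℕ → Bool) : ℕ∞ :=
  if ω 0 = false then 1
  else if ω 1 = false then 2
  else if _h : {k : ℕ | 2 ≤ k ∧ walkW ω k = 1}.Nonempty then
    (((sInf {k : ℕ | 2 ≤ k ∧ walkW ω k = 1} + 1) / 2 : ℕ) : ℕ∞)
  else ⊤

lemma walkW_succ (ω : ℕ → Bool) (k : ℕ) :
    walkW ω (k + 1) = walkW ω k + (if ω k then 1 else -1) := by
  unfold walkW
  rw [Finset.range_add_one, Finset.filter_insert, Finset.filter_insert]
  cases h : ω k <;>
    simp [Finset.card_insert_of_notMem, Finset.notMem_range_self, h] <;> ring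

lemma walkW_two (ω : ℕ → Bool) (h0 : ω 0 = true) (h1 : ω 1 = true) :
    walkW ω 2 = 2 := by
  have e0 : walkW ω 0 = 0 := by simp [walkW]
  have e1 := walkW_succ ω 0
  have e2 := walkW_succ ω 1
  rw [h0] at e1; rw [h1] at e2
  simp at e1 e2
  omega

lemma smL_eq_top_iff (ω : ℕ → Bool) :
    smL ω = ⊤ ↔ ω 0 = true ∧ ω 1 = true ∧ ∀ k, 2 ≤ k → walkW ω k ≠ 1 := by
  unfold smL
  rcases Bool.eq_false_or_eq_true (ω 0) with h0 | h0 <;>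
    rcases Bool.eq_false_or_eq_true (ω 1) with h1 | h1 <;>
    simp [h0, h1]
  · constructor
    · intro h k hk hw
      exact h ⟨k, hk, hw⟩
    · rintro h ⟨k, hk, hw⟩
      exact h k hk hw

lemma walk_ge_two (ω : ℕ → Bool) (h0 : ω 0 = true) (h1 : ω 1 = true)
    (hno : ∀ k, 2 ≤ k → walkW ω k ≠ 1) : ∀ k, 2 ≤ k → 2 ≤ walkW ω k := by
  intro k hk
  induction k, hk using Nat.le_induction with
  | base => rw [walkW_two ω h0 h1]
  | succ n hn ih =>
    have hstep := walkW_succ ω n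
    have hne := hno (n + 1) (by omega)
    cases h : ω n <;> rw [h] at hstep <;> simp at hstep <;> omega

lemma cylinder_measurable (k : ℕ) (w : Fin k → Bool) :
    MeasurableSet {ω : ℕ → Bool | ∀ i : Fin k, ω i = w i} := by
  have : {ω : ℕ → Bool | ∀ i : Fin k, ω i = w i} =
      ⋂ i : Fin k, (fun ω : ℕ → Bool => ω (i : ℕ)) ⁻¹' {w i} := by
    ext ω; simp
  rw [this]
  exact MeasurableSet.iInter fun i =>
    (measurable_pi_apply (i : ℕ)) (measurableSet_singleton (w i))

lemma measure_event (μ : Measure (ℕ → Bool)) (k : ℕ) (P : (Fin k → Bool) → Prop)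
    [DecidablePred P] :
    μ {ω | P (fun i => ω (i : ℕ))} =
      ∑ w ∈ Finset.univ.filter (fun w => P w), μ {ω | ∀ i : Fin k, ω i = w i} := by
  have hset : {ω : ℕ → Bool | P (fun i => ω (i : ℕ))} =
      ⋃ w ∈ Finset.univ.filter (fun w => P w), {ω | ∀ i : Fin k, ω i = w i} := by
    ext ω
    simp only [Set.mem_setOf_eq, Set.mem_iUnion, Finset.mem_filter, Finset.mem_univ,
      true_and]
    constructor
    · intro h
      exact ⟨fun i => ω i, h, fun i => rfl⟩
    · rintro ⟨w, hw, hcyl⟩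
      have : (fun i : Fin k => ω (i : ℕ)) = w := funext hcyl
      rwa [this]
  rw [hset]
  rw [measure_biUnion_finset ?_ (fun w _ => cylinder_measurable k w)]
  intro w hw w' hw' hne
  simp only [Function.onFun]
  rw [Set.disjoint_left]
  intro ω h1 h2
  exact hne (funext fun i => (h1 i).symm.trans (h2 i))

lemma card_filter_range_eq (ω : ℕ → Bool) (k : ℕ) :
    ((Finset.range k).filter fun i => ω i = true).card =
      ((Finset.univ : Finset (Fin k)).filter fun i : Fin k => ω i.val = true).card := by
  rw [Finset.card_filter, Finset.card_filter,
    ← Fin.sum_univ_eq_sum_range (fun i => if ω i = true then 1 else 0) k]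

set_option maxHeartbeats 1000000 in
lemma part1 (q p : ℝ) (hq0 : 0 < q) (hq : q < 1 / 2) (hp : p = 1 - q)
    (μ : Measure (ℕ → Bool)) [IsProbabilityMeasure μ]
    (hμ : ∀ (n : ℕ) (w : Fin n → Bool),
      μ {ω | ∀ i : Fin n, ω i = w i} =
        ∏ i : Fin n, (if w i then ENNReal.ofReal q else ENNReal.ofReal p)) :
    μ {ω | smL ω < ⊤} = 1 := by
  have hp0 : 0 < p := by rw [hp]; linarith
  have hqp : q ≤ p := by rw [hp]; linarith
  set E : Set (ℕ → Bool) := {ω | smL ω = ⊤} with hE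
  set r : ℝ := 4 * (q * p) with hr
  have hr0 : 0 ≤ r := by positivity
  have hr1 : r < 1 := by rw [hr, hp]; nlinarith [sq_nonneg (1 - 2*q)]
  -- μ E ≤ ofReal (r ^ m) for every m ≥ 1
  have hbound : ∀ m : ℕ, μ E ≤ ENNReal.ofReal (r ^ (m + 1)) := by
    intro m
    set m' := m + 1 with hm'
    set k := 2 * m' with hk
    set P : (Fin k → Bool) → Prop :=
      fun w => k + 2 ≤ 2 * ((Finset.univ : Finset (Fin k)).filter
        (fun i : Fin k => w i = true)).card with hP
    have hsub : E ⊆ {ω | P (fun i => ω (i : ℕ))} := by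
      intro ω hω
      rw [hE, Set.mem_setOf_eq, smL_eq_top_iff] at hω
      obtain ⟨h0, h1, hno⟩ := hω
      have hwalk : 2 ≤ walkW ω k := walk_ge_two ω h0 h1 hno k (by omega)
      have hcard : ((Finset.range k).filter fun i => ω i = true).card +
          ((Finset.range k).filter fun i => ω i = false).card = k := by
        have hneg : ((Finset.range k).filter fun i => ω i = false) =
            ((Finset.range k).filter fun i => ¬ ω i = true) :=
          Finset.filter_congr (fun i _ => by simp)
        have htot := Finset.card_filter_add_card_filter_not
          (s := Finset.range k) (p := fun i => ω i = true)
        rw [Finset.card_range] at htot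
        rw [hneg]
        exact htot
      rw [walkW] at hwalk
      have hconv := card_filter_range_eq ω k
      simp only [Set.mem_setOf_eq, hP]
      omega
    calc μ E ≤ μ {ω | P (fun i => ω (i : ℕ))} := measure_mono hsub
      _ = ∑ w ∈ Finset.univ.filter (fun w => P w), μ {ω | ∀ i : Fin k, ω i = w i} :=
          measure_event μ k P
      _ ≤ ∑ _w ∈ Finset.univ.filter (fun w => P w), ENNReal.ofReal ((q * p) ^ m') := by
          refine Finset.sum_le_sum fun w hw => ?_
          rw [hμ]
          simp only [Finset.mem_filter, Finset.mem_univ, true_and, hP] at hw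
          set t := ((Finset.univ : Finset (Fin k)).filter (fun i => w i = true)).card with ht
          have htk : t ≤ k := le_trans (Finset.card_filter_le _ _) (by simp)
          have htm : m' ≤ t := by omega
          have hprod : (∏ i : Fin k, (if w i then ENNReal.ofReal q else ENNReal.ofReal p)) =
              ENNReal.ofReal (q ^ t * p ^ (k - t)) := by
            have h1 : ∀ i : Fin k, (if w i then ENNReal.ofReal q else ENNReal.ofReal p) =
                ENNReal.ofReal (if w i then q else p) := by
              intro i; split <;> rfl
            rw [Finset.prod_congr rfl (fun i _ => h1 i)]
            rw [← ENNReal.ofReal_prod_of_nonneg (fun i _ => by split <;> positivity)]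
            congr 1
            rw [Finset.prod_ite, Finset.prod_const, Finset.prod_const]
            have hcard2 : ((Finset.univ : Finset (Fin k)).filter (fun i => ¬ w i = true)).card
                = k - t := by
              have := Finset.card_filter_add_card_filter_not
                (s := (Finset.univ : Finset (Fin k))) (p := fun i => w i = true)
              simp only [Finset.card_univ, Fintype.card_fin] at this
              omega
            rw [hcard2]
          rw [hprod]
          apply ENNReal.ofReal_le_ofReal
          have key : q ^ t * p ^ (k - t) ≤ q ^ m' * p ^ m' := by
            have e1 : q ^ t = q ^ m' * q ^ (t - m') := by
              rw [← pow_add]; congr 1; omega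
            have e2 : (t - m') + (k - t) = m' := by omega
            calc q ^ t * p ^ (k - t) = q ^ m' * (q ^ (t - m') * p ^ (k - t)) := by
                  rw [e1]; ring
              _ ≤ q ^ m' * (p ^ (t - m') * p ^ (k - t)) := by
                  apply mul_le_mul_of_nonneg_left _ (by positivity)
                  apply mul_le_mul_of_nonneg_right _ (by positivity)
                  exact pow_le_pow_left₀ hq0.le hqp _
              _ = q ^ m' * p ^ m' := by rw [← pow_add, e2]
          calc q ^ t * p ^ (k - t) ≤ q ^ m' * p ^ m' := key
            _ = (q * p) ^ m' := (mul_pow q p m').symm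
      _ ≤ ENNReal.ofReal (r ^ m') := by
          rw [Finset.sum_const, nsmul_eq_mul]
          have hcard3 : ((Finset.univ.filter (fun w => P w)).card : ℝ≥0∞) ≤
              ((2 ^ k : ℕ) : ℝ≥0∞) := by
            norm_cast
            calc (Finset.univ.filter (fun w => P w)).card ≤
                (Finset.univ : Finset (Fin k → Bool)).card := Finset.card_filter_le _ _
              _ = 2 ^ k := by simp [Finset.card_univ]
          calc ((Finset.univ.filter (fun w => P w)).card : ℝ≥0∞) *
                ENNReal.ofReal ((q * p) ^ m')
              ≤ ((2 ^ k : ℕ) : ℝ≥0∞) * ENNReal.ofReal ((q * p) ^ m') := by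
                exact mul_le_mul_left hcard3 _
            _ = ENNReal.ofReal ((2 ^ k : ℕ) * (q * p) ^ m') := by
                rw [ENNReal.ofReal_mul (by positivity)]
                congr 1
                exact (ENNReal.ofReal_natCast _).symm
            _ = ENNReal.ofReal (r ^ m') := by
                congr 1
                rw [hr, hk]
                push_cast
                rw [pow_mul, mul_pow]
                ring
  -- conclude μ E = 0
  have hE0 : μ E = 0 := by
    have htend : Filter.Tendsto (fun m : ℕ => ENNReal.ofReal (r ^ (m + 1)))
        Filter.atTop (nhds 0) := by
      have h1 : Filter.Tendsto (fun m : ℕ => r ^ (m + 1)) Filter.atTop (nhds 0) := by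
        have := tendsto_pow_atTop_nhds_zero_of_lt_one hr0 hr1
        exact this.comp (Filter.tendsto_add_atTop_nat 1)
      have := (ENNReal.continuous_ofReal.tendsto 0).comp h1
      rwa [ENNReal.ofReal_zero] at this
    have := ge_of_tendsto' htend hbound
    exact le_antisymm (by simpa using this) zero_le
  -- conclude
  have hcompl : {ω | smL ω < ⊤} = Eᶜ := by
    ext ω; simp [hE, lt_top_iff_ne_top]
  rw [hcompl]
  refine le_antisymm prob_le_one ?_
  have : (1 : ℝ≥0∞) = μ Set.univ := (measure_univ).symm
  rw [this, ← Set.compl_union_self E]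
  calc μ (Eᶜ ∪ E) ≤ μ Eᶜ + μ E := measure_union_le _ _
    _ = μ Eᶜ := by rw [hE0, add_zero]

lemma catalanC_eq_catalan (n : ℕ) : catalanC n = (catalan n : ℝ) := by
  have h1 : (n + 1) * catalan n = n.centralBinom := succ_mul_catalan_eq_centralBinom n
  have h2 : n.centralBinom * (n.factorial * n.factorial) = (2 * n).factorial := by
    have := Nat.choose_mul_factorial_mul_factorial (show n ≤ 2 * n by omega)
    rw [Nat.centralBinom]
    rw [show 2 * n - n = n by omega] at this
    linarith [this]
  have h3 : ((2*n).factorial : ℝ) = ((n+1) * catalan n : ℕ) * (n.factorial * n.factorial) := by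
    rw [h1]; exact_mod_cast h2.symm
  have hf : (n.factorial : ℝ) ≠ 0 := Nat.cast_ne_zero.mpr n.factorial_ne_zero
  have hf1 : ((n+1).factorial : ℝ) ≠ 0 := Nat.cast_ne_zero.mpr (n+1).factorial_ne_zero
  rw [catalanC, h3, Nat.factorial_succ]
  push_cast
  field_simp

lemma triangle_le_square (f : ℕ → ℝ) (hf : ∀ i, 0 ≤ f i) (N : ℕ) :
    ∑ n ∈ Finset.range N, ∑ i ∈ Finset.range (n+1), f i * f (n - i) ≤
      (∑ m ∈ Finset.range N, f m) ^ 2 := by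
  rw [sq, Finset.sum_mul_sum, ← Finset.sum_product']
  rw [← Finset.sum_sigma (Finset.range N) (fun n => Finset.range (n+1))
      (fun p => f p.2 * f (p.1 - p.2))]
  have key : ∑ p ∈ (Finset.range N).sigma (fun n => Finset.range (n+1)),
      f p.2 * f (p.1 - p.2) =
      ∑ x ∈ (Finset.range N ×ˢ Finset.range N).filter (fun x => x.1 + x.2 < N),
        f x.1 * f x.2 := by
    refine Finset.sum_nbij' (fun p => (p.2, p.1 - p.2)) (fun x => ⟨x.1 + x.2, x.1⟩)
      ?_ ?_ ?_ ?_ ?_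
    · intro p hp
      simp only [Finset.mem_sigma, Finset.mem_range] at hp
      simp only [Finset.mem_filter, Finset.mem_product, Finset.mem_range]
      omega
    · intro x hx
      simp only [Finset.mem_filter, Finset.mem_product, Finset.mem_range] at hx
      simp only [Finset.mem_sigma, Finset.mem_range]
      omega
    · intro p hp
      simp only [Finset.mem_sigma, Finset.mem_range] at hp
      obtain ⟨n, i⟩ := p
      simp only at *
      congr 1 <;> omega
    · intro x _
      simp only []
      ext <;> simp <;> omega
    · intro p hp
      simp only [Finset.mem_sigma, Finset.mem_range] at hp
      rfl
  rw [key]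
  exact Finset.sum_le_sum_of_subset_of_nonneg (Finset.filter_subset _ _)
    (fun p _ _ => mul_nonneg (hf _) (hf _))

section analytic
variable {q : ℝ} (hq0 : 0 < q) (hq : q < 1 / 2)

lemma catalan_hasSum (hq0 : 0 < q) (hq : q < 1 / 2) :
    HasSum (fun m : ℕ => (catalan m : ℝ) * ((1 - q) * q) ^ m) (1 / (1 - q)) := by
  set p : ℝ := 1 - q with hp
  have hp0 : 0 < p := by rw [hp]; linarith
  have hqp : q ≤ p := by rw [hp]; linarith
  set x : ℝ := p * q with hx
  have hx0 : 0 < x := mul_pos hp0 hq0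
  set a : ℕ → ℝ := fun m => (catalan m : ℝ) * x ^ m with ha
  have ha0 : ∀ m, 0 ≤ a m := fun m =>
    mul_nonneg (Nat.cast_nonneg _) (pow_nonneg hx0.le _)
  -- partial sums bounded by 1/p
  have hbound : ∀ N, ∑ m ∈ Finset.range N, a m ≤ 1 / p := by
    intro N
    induction N with
    | zero => simp; positivity
    | succ N ih =>
      rw [Finset.sum_range_succ']
      have h0 : a 0 = 1 := by simp [ha]
      have hstep : ∑ i ∈ Finset.range N, a (i + 1) ≤
          x * (∑ m ∈ Finset.range N, a m) ^ 2 := by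
        have hrw : ∀ n, a (n + 1) =
            x * ∑ i ∈ Finset.range (n+1), a i * a (n - i) := by
          intro n
          have hc : (catalan (n+1) : ℝ) =
              ∑ i ∈ Finset.range (n+1), (catalan i : ℝ) * (catalan (n - i) : ℝ) := by
            have h := catalan_succ n
            rw [← Finset.sum_range (fun i => catalan i * catalan (n - i))] at h
            rw [h]; push_cast; rfl
          simp only [ha]
          rw [hc, Finset.sum_mul, Finset.mul_sum]
          refine Finset.sum_congr rfl fun i hi => ?_
          simp only [Finset.mem_range] at hi
          have hxx : x ^ i * x ^ (n - i) = x ^ n := by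
            rw [← pow_add]; congr 1; omega
          rw [show x ^ (n+1) = x * (x ^ i * x ^ (n - i)) by rw [hxx]; ring]
          ring
        calc ∑ i ∈ Finset.range N, a (i + 1)
            = x * ∑ n ∈ Finset.range N, ∑ i ∈ Finset.range (n+1), a i * a (n - i) := by
              rw [Finset.mul_sum]; exact Finset.sum_congr rfl fun n _ => hrw n
          _ ≤ x * (∑ m ∈ Finset.range N, a m) ^ 2 := by
              exact mul_le_mul_of_nonneg_left (triangle_le_square a ha0 N) hx0.le
      have hsq : x * (∑ m ∈ Finset.range N, a m) ^ 2 ≤ x * (1/p)^2 := by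
        refine mul_le_mul_of_nonneg_left ?_ hx0.le
        exact pow_le_pow_left₀ (Finset.sum_nonneg fun i _ => ha0 i) ih 2
      have : x * (1/p)^2 + 1 = 1/p := by
        field_simp [hx]
        ring
      linarith
  have hsummable : Summable a := by
    refine summable_of_sum_range_le ha0 hbound
  set g : ℝ := ∑' m, a m with hg
  have hgle : g ≤ 1 / p := Real.tsum_le_of_sum_range_le ha0 hbound
  have hg0 : 0 ≤ g := tsum_nonneg ha0
  -- Cauchy product: g * g = ∑' n, catalan (n+1) * x^n
  have hnorm : Summable fun m => ‖a m‖ := by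
    simpa [Real.norm_of_nonneg (ha0 _)] using hsummable
  have hcauchy : g * g = ∑' n : ℕ, (catalan (n+1) : ℝ) * x ^ n := by
    rw [hg, tsum_mul_tsum_eq_tsum_sum_range_of_summable_norm hnorm hnorm]
    congr 1
    funext n
    have hc : (catalan (n+1) : ℝ) =
        ∑ i ∈ Finset.range (n+1), (catalan i : ℝ) * (catalan (n - i) : ℝ) := by
      have h := catalan_succ n
      rw [← Finset.sum_range (fun i => catalan i * catalan (n - i))] at h
      rw [h]; push_cast; rfl
    rw [hc, Finset.sum_mul]
    refine Finset.sum_congr rfl fun i hi => ?_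
    simp only [Finset.mem_range] at hi
    have hxx : x ^ i * x ^ (n - i) = x ^ n := by
      rw [← pow_add]; congr 1; omega
    simp only [ha]
    rw [← hxx]
    ring
  -- g = 1 + x * g^2
  have hshift : g = 1 + x * (g * g) := by
    rw [hcauchy, ← tsum_mul_left]
    have : ∀ n : ℕ, x * ((catalan (n+1) : ℝ) * x ^ n) = a (n + 1) := by
      intro n; simp only [ha]; ring
    rw [tsum_congr this]
    have := Summable.tsum_eq_zero_add hsummable
    have h0 : a 0 = 1 := by simp [ha]
    rw [hg, this, h0]
  -- roots
  have hfact : (p * g - 1) * (q * g - 1) = 0 := by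
    have : x * (g * g) - g + 1 = 0 := by linarith
    have hpq : p + q = 1 := by rw [hp]; ring
    nlinarith [this]
  have hqg : q * g - 1 ≠ 0 := by
    have : q * g ≤ q / p := by
      calc q * g ≤ q * (1/p) := mul_le_mul_of_nonneg_left hgle hq0.le
        _ = q / p := by ring
    have hlt : q / p < 1 := by
      rw [div_lt_one hp0]; rw [hp]; linarith
    intro h
    have : q * g = 1 := by linarith
    linarith
  have hpg : p * g = 1 := by
    rcases mul_eq_zero.mp hfact with h | h
    · linarith
    · exact absurd h hqg
  have hgval : g = 1 / p := by
    field_simp at hpg ⊢; linarith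
  exact hgval ▸ hsummable.hasSum

end analytic

lemma part2 (q p : ℝ) (hq0 : 0 < q) (hq : q < 1 / 2) (hp : p = 1 - q) :
    p + p * q + p * q ^ 2 +
      ∑' n : ℕ, p ^ (n + 2) * q ^ (n + 3) * catalanC (n + 1) = 1 := by
  have hp0 : 0 < p := by rw [hp]; linarith
  have hS := catalan_hasSum hq0 hq
  rw [← hp] at hS
  set a : ℕ → ℝ := fun m => (catalan m : ℝ) * (p * q) ^ m with ha
  have hterm : ∀ n : ℕ, p ^ (n + 2) * q ^ (n + 3) * catalanC (n + 1) =
      p * q ^ 2 * a (n + 1) := by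
    intro n
    rw [catalanC_eq_catalan]
    simp only [ha, mul_pow]
    ring
  rw [tsum_congr hterm, tsum_mul_left]
  have hshift : ∑' n : ℕ, a (n + 1) = 1 / p - 1 := by
    have h := Summable.tsum_eq_zero_add hS.summable
    rw [hS.tsum_eq] at h
    have h0 : a 0 = 1 := by simp [ha]
    rw [h0] at h
    linarith
  rw [hshift, hp]
  have : (0:ℝ) < 1 - q := by linarith
  field_simp
  ring

/-- The selfish-mining cycle length is almost surely finite: `μ(L < ∞) = 1`;
equivalently `p + pq + pq² + ∑_{n ≥ 3} p^(n-1) q^n C_(n-2) = 1` (the sum over `n ≥ 3`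
being written with the index shift `n ↦ n + 3`). -/
theorem smL_as_finite (q p : ℝ) (hq0 : 0 < q) (hq : q < 1 / 2) (hp : p = 1 - q)
    (μ : Measure (ℕ → Bool)) [IsProbabilityMeasure μ]
    (hμ : ∀ (n : ℕ) (w : Fin n → Bool),
      μ {ω | ∀ i : Fin n, ω i = w i} =
        ∏ i : Fin n, (if w i then ENNReal.ofReal q else ENNReal.ofReal p)) :
    μ {ω | smL ω < ⊤} = 1 ∧
    p + p * q + p * q ^ 2 +
      ∑' n : ℕ, p ^ (n + 2) * q ^ (n + 3) * catalanC (n + 1) = 1 := by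
  exact ⟨part1 q p hq0 hq hp μ hμ, part2 q p hq0 hq hp⟩
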